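/- A vector-valued modular function $F$ of type $\rho_M$ (for $M = I\!I_{1,1}(N)\times I\!I_{1,1}$, components indexed by $\mathbb{Z}/N\mathbb{Z}\times\mathbb{Z}/N\mathbb{Z}$) is uniquely determined by its components $F_{0,i}$, $i\in\mathbb{Z}/N\mathbb{Z}$. In particular, if $F_{0,i}=0$ for all $i$, then $F=0$. -/

import Mathlib

/-- The normalized exponential `e(z) = exp(2πiz)`. -/
noncomputable def e (z : ℂ) : ℂ := Complex.exp (2 * Real.pi * Complex.I * z)

lemma e_add (x y : ℂ) : e (x + y) = e x * e y := by
  simp [e, mul_add, Complex.exp_add]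

lemma e_int (m : ℤ) : e (m : ℂ) = 1 := by
  simpa [e, mul_comm ((2:ℂ) * Real.pi * Complex.I)] using
    Complex.exp_int_mul_two_pi_mul_I m

noncomputable def eZ (N : ℕ) (a : ZMod N) : ℂ := e ((a.val : ℂ) / N)

lemma eZ_int (N : ℕ) [NeZero N] (m : ℤ) : e ((m : ℂ) / N) = eZ N (m : ZMod N) := by
  have hN : (N : ℂ) ≠ 0 := Nat.cast_ne_zero.2 (NeZero.ne N)
  set a : ZMod N := (m : ZMod N) with ha
  have h0 : ((m - (a.val : ℤ) : ℤ) : ZMod N) = 0 := by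
    push_cast
    simp [ha, ZMod.natCast_val]
  obtain ⟨q, hq⟩ := (ZMod.intCast_zmod_eq_zero_iff_dvd _ _).mp h0
  have hm : (m : ℂ) = (a.val : ℂ) + N * q := by
    have : (m : ℤ) = (a.val : ℤ) + N * q := by linarith
    exact_mod_cast congrArg (Int.cast : ℤ → ℂ) this
  rw [hm]
  rw [show ((a.val : ℂ) + N * q) / N = (a.val : ℂ) / N + q by field_simp]
  rw [e_add, e_int, mul_one, eZ]

lemma eZ_nat (N : ℕ) [NeZero N] (n : ℕ) : e ((n : ℂ) / N) = eZ N (n : ZMod N) := by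
  simpa using eZ_int N (n : ℤ)

lemma eZ_add (N : ℕ) [NeZero N] (a b : ZMod N) : eZ N (a + b) = eZ N a * eZ N b := by
  have h1 : eZ N (a + b) = e (((a.val + b.val : ℕ) : ℂ) / N) := by
    rw [eZ_nat]
    congr 1
    push_cast [ZMod.natCast_val]
    simp
  rw [h1]
  push_cast [add_div, e_add]
  rfl

lemma eZ_mul_comm (N : ℕ) [NeZero N] (a b : ZMod N) : eZ N (a * b) = eZ N (b * a) := by
  rw [mul_comm]

/-- `eZ` as a power of the standard root of unity in the exponent of a product of vals. -/
lemma eZ_mul_val (N : ℕ) [NeZero N] (a b : ZMod N) :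
    eZ N (a * b) = (e ((1 : ℂ) / N)) ^ (a.val * b.val) := by
  have h1 : eZ N (a * b) = e (((a.val * b.val : ℕ) : ℂ) / N) := by
    rw [eZ_nat]
    congr 1
    push_cast [ZMod.natCast_val]
    simp
  rw [h1]
  rw [e, e, ← Complex.exp_nat_mul]
  congr 1
  push_cast
  ring

lemma sum_eZ (N : ℕ) [NeZero N] (c : ZMod N) :
    (∑ l : ZMod N, eZ N (c * l)) = if c = 0 then (N : ℂ) else 0 := by
  have hN : 0 < N := Nat.pos_of_ne_zero (NeZero.ne N)
  have hsum : (∑ l : ZMod N, eZ N (c * l)) =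
      ∑ k ∈ Finset.range N, (e ((1 : ℂ) / N) ^ c.val) ^ k := by
    refine Finset.sum_nbij' (i := fun l : ZMod N => l.val)
      (j := fun k : ℕ => (k : ZMod N)) ?_ ?_ ?_ ?_ ?_
    · intro l _; exact Finset.mem_range.2 (ZMod.val_lt l)
    · intro k _; exact Finset.mem_univ _
    · intro l _; simp [ZMod.natCast_val]
    · intro k hk; exact ZMod.val_cast_of_lt (Finset.mem_range.1 hk)
    · intro l _; rw [eZ_mul_val, ← pow_mul]
  rw [hsum]
  by_cases hc : c = 0
  · simp [hc, ZMod.val_zero]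
  · rw [if_neg hc]
    set ω : ℂ := e ((1 : ℂ) / N) ^ c.val with hω
    have hζ : IsPrimitiveRoot (e ((1 : ℂ) / N)) N := by
      have h := Complex.isPrimitiveRoot_exp N (NeZero.ne N)
      have he : e ((1 : ℂ) / N) = Complex.exp (2 * Real.pi * Complex.I / N) := by
        simp only [e]; ring_nf
      rwa [he]
    have hω1 : ω ≠ 1 := by
      intro h
      have : c.val = 0 := by
        by_contra hv
        exact (hζ.pow_ne_one_of_pos_of_lt hv (ZMod.val_lt c)) h
      exact hc (by rwa [← ZMod.val_eq_zero])
    have hωN : ω ^ N = 1 := by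
      rw [hω, ← pow_mul, mul_comm, pow_mul, hζ.pow_eq_one, one_pow]
    rw [geom_sum_eq hω1, hωN]
    simp

/-- a vector-valued modular function of type `ρ_M`
(`M = II_{1,1}(N) × II_{1,1}`, components indexed by `ℤ/N × ℤ/N`, satisfying the `T`- and
`S`-transformation laws) is uniquely determined by its components `F_{0,i}`, `i ∈ ℤ/N`:
if `F` and `G` both satisfy the transformation laws and agree on the components `(0, i)`,
then they are equal.  In particular (taking `G = 0`), if `F_{0,i} = 0` for all `i` then
`F = 0`. -/
theorem stmt_5 (N : ℕ) [NeZero N] (F G : ZMod N → ZMod N → ℂ → ℂ)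
    (hFT : ∀ (i k : ZMod N) (τ : ℂ), 0 < τ.im →
      F i k (τ + 1) = e (((i.val * k.val : ℕ) : ℂ) / N) * F i k τ)
    (hFS : ∀ (i k : ZMod N) (τ : ℂ), 0 < τ.im →
      F i k (-1 / τ) = (1 / N) * ∑ j : ZMod N, ∑ l : ZMod N,
        e ((-((j.val * k.val : ℕ) : ℂ) - ((i.val * l.val : ℕ) : ℂ)) / N) * F j l τ)
    (hGT : ∀ (i k : ZMod N) (τ : ℂ), 0 < τ.im →
      G i k (τ + 1) = e (((i.val * k.val : ℕ) : ℂ) / N) * G i k τ)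
    (hGS : ∀ (i k : ZMod N) (τ : ℂ), 0 < τ.im →
      G i k (-1 / τ) = (1 / N) * ∑ j : ZMod N, ∑ l : ZMod N,
        e ((-((j.val * k.val : ℕ) : ℂ) - ((i.val * l.val : ℕ) : ℂ)) / N) * G j l τ)
    (h0 : ∀ (i : ZMod N) (τ : ℂ), 0 < τ.im → F 0 i τ = G 0 i τ) :
    ∀ (i k : ZMod N) (τ : ℂ), 0 < τ.im → F i k τ = G i k τ := by
  have hNC : (N : ℂ) ≠ 0 := Nat.cast_ne_zero.2 (NeZero.ne N)
  set H : ZMod N → ZMod N → ℂ → ℂ := fun i k τ => F i k τ - G i k τ with hHdef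
  -- coefficient conversions
  have hcT : ∀ i k : ZMod N, e (((i.val * k.val : ℕ) : ℂ) / N) = eZ N (i * k) := by
    intro i k
    rw [eZ_nat]
    congr 1
    push_cast [ZMod.natCast_val]
    simp
  have hcS : ∀ i k j l : ZMod N,
      e ((-((j.val * k.val : ℕ) : ℂ) - ((i.val * l.val : ℕ) : ℂ)) / N)
        = eZ N (-(j * k) - i * l) := by
    intro i k j l
    have h1 : (-((j.val * k.val : ℕ) : ℂ) - ((i.val * l.val : ℕ) : ℂ))
        = (((-(j.val * k.val : ℤ) - (i.val * l.val : ℤ)) : ℤ) : ℂ) := by push_cast; ring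
    rw [h1, eZ_int]
    congr 1
    push_cast [ZMod.natCast_val]
    simp
  -- transformation laws for H
  have hHT : ∀ (i k : ZMod N) (τ : ℂ), 0 < τ.im →
      H i k (τ + 1) = eZ N (i * k) * H i k τ := by
    intro i k τ hτ
    simp only [hHdef]
    rw [hFT i k τ hτ, hGT i k τ hτ, hcT, mul_sub]
  have hHS : ∀ (i k : ZMod N) (τ : ℂ), 0 < τ.im →
      H i k (-1 / τ) = (1 / N) * ∑ j : ZMod N, ∑ l : ZMod N,
        eZ N (-(j * k) - i * l) * H j l τ := by
    intro i k τ hτ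
    simp only [hHdef]
    rw [hFS i k τ hτ, hGS i k τ hτ, ← mul_sub, ← Finset.sum_sub_distrib]
    congr 1
    refine Finset.sum_congr rfl fun j _ => ?_
    rw [← Finset.sum_sub_distrib]
    refine Finset.sum_congr rfl fun l _ => ?_
    rw [← mul_sub, hcS]
  -- partial Fourier transform in the second variable
  set K : ZMod N → ZMod N → ℂ → ℂ :=
    fun i m τ => ∑ l : ZMod N, eZ N (m * l) * H i l τ with hKdef
  -- T-law for K
  have hKT : ∀ (i m : ZMod N) (τ : ℂ), 0 < τ.im → K i m (τ + 1) = K i (m + i) τ := by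
    intro i m τ hτ
    simp only [hKdef]
    refine Finset.sum_congr rfl fun l _ => ?_
    rw [hHT i l τ hτ, ← mul_assoc, ← eZ_add N]
    congr 2
    ring
  -- S-law for K
  have hKS : ∀ (i m : ZMod N) (τ : ℂ), 0 < τ.im → K i m (-1 / τ) = K m (-i) τ := by
    intro i m τ hτ
    have expand : ∀ l : ZMod N, eZ N (m * l) * H i l (-1 / τ)
        = (1 / N : ℂ) * ∑ j : ZMod N, ∑ l' : ZMod N,
          eZ N ((m - j) * l) * (eZ N (-i * l') * H j l' τ) := by
      intro l
      rw [hHS i l τ hτ, ← mul_assoc, mul_comm (eZ N (m * l)) ((1:ℂ)/N), mul_assoc]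
      congr 1
      rw [Finset.mul_sum]
      refine Finset.sum_congr rfl fun j _ => ?_
      rw [Finset.mul_sum]
      refine Finset.sum_congr rfl fun l' _ => ?_
      have harg : m * l + (-(j * l) - i * l') = (m - j) * l + (-i) * l' := by ring
      calc eZ N (m * l) * (eZ N (-(j * l) - i * l') * H j l' τ)
          = eZ N (m * l + (-(j * l) - i * l')) * H j l' τ := by rw [eZ_add]; ring
        _ = eZ N ((m - j) * l + (-i) * l') * H j l' τ := by rw [harg]
        _ = eZ N ((m - j) * l) * (eZ N (-i * l') * H j l' τ) := by rw [eZ_add]; ring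
    have step1 : K i m (-1 / τ) = (1 / N : ℂ) * ∑ l : ZMod N, ∑ j : ZMod N, ∑ l' : ZMod N,
        eZ N ((m - j) * l) * (eZ N (-i * l') * H j l' τ) := by
      simp only [hKdef]
      rw [Finset.sum_congr rfl fun l _ => expand l, ← Finset.mul_sum]
    rw [step1, Finset.sum_comm]
    have step2 : ∀ j : ZMod N, (∑ l : ZMod N, ∑ l' : ZMod N,
        eZ N ((m - j) * l) * (eZ N (-i * l') * H j l' τ))
        = (if m - j = 0 then (N : ℂ) else 0) * ∑ l' : ZMod N, eZ N (-i * l') * H j l' τ := by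
      intro j
      rw [← sum_eZ N (m - j), Finset.sum_mul]
      refine Finset.sum_congr rfl fun l _ => ?_
      rw [Finset.mul_sum]
    simp only [step2]
    have step3 : ∀ j : ZMod N, (if m - j = 0 then (N : ℂ) else 0)
        = if m = j then (N : ℂ) else 0 := by
      intro j; simp [sub_eq_zero]
    simp only [step3, ite_mul, zero_mul, Finset.sum_ite_eq, Finset.mem_univ, if_true]
    rw [← mul_assoc]
    simp [hNC, hKdef]
  -- im (-1/τ) > 0
  have him : ∀ τ : ℂ, 0 < τ.im → 0 < (-1 / τ).im := by
    intro τ hτ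
    have hτ0 : τ ≠ 0 := fun h => by simp [h] at hτ
    have h1 : (-1 / τ) = -τ⁻¹ := by field_simp
    rw [h1, Complex.neg_im, Complex.inv_im]
    have h2 : 0 < Complex.normSq τ := Complex.normSq_pos.2 hτ0
    have h3 : 0 < τ.im / Complex.normSq τ := div_pos hτ h2
    simpa [neg_div] using h3
  -- closure of the vanishing set under the moves
  have hTstep : ∀ a b : ZMod N, (∀ τ : ℂ, 0 < τ.im → K a b τ = 0) →
      ∀ τ : ℂ, 0 < τ.im → K a (b + a) τ = 0 := by
    intro a b h τ hτ
    have h1 : (0 : ℝ) < (τ + 1).im := by simpa using hτ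
    rw [← hKT a b τ hτ]
    exact h (τ + 1) h1
  have hSstep : ∀ a b : ZMod N, (∀ τ : ℂ, 0 < τ.im → K a b τ = 0) →
      ∀ τ : ℂ, 0 < τ.im → K b (-a) τ = 0 := by
    intro a b h τ hτ
    rw [← hKS a b τ hτ]
    exact h (-1 / τ) (him τ hτ)
  have hTiter : ∀ (k : ℕ) (a b : ZMod N), (∀ τ : ℂ, 0 < τ.im → K a b τ = 0) →
      ∀ τ : ℂ, 0 < τ.im → K a (b + k • a) τ = 0 := by
    intro k
    induction k with
    | zero => intro a b h τ hτ; simpa using h τ hτ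
    | succ k ih =>
      intro a b h τ hτ
      have h1 : b + (k + 1) • a = (b + k • a) + a := by
        rw [add_smul, one_smul, add_assoc]
      rw [h1]
      exact hTstep a (b + k • a) (ih a b h) τ hτ
  -- base case
  have hzero : ∀ (b : ZMod N) (τ : ℂ), 0 < τ.im → K 0 b τ = 0 := by
    intro b τ hτ
    simp only [hKdef, hHdef]
    refine Finset.sum_eq_zero fun l _ => ?_
    rw [h0 l τ hτ]
    ring
  -- main induction on the value of the first index
  have hmain : ∀ (n : ℕ) (a b : ZMod N), a.val = n → ∀ τ : ℂ, 0 < τ.im → K a b τ = 0 := by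
    intro n
    induction n using Nat.strong_induction_on with
    | _ n ih =>
      intro a b ha τ hτ
      by_cases h0a : a = 0
      · subst h0a; exact hzero b τ hτ
      · have hav : 0 < a.val := Nat.pos_of_ne_zero fun h => h0a (by rwa [← ZMod.val_eq_zero])
        set q : ℕ := b.val / a.val with hq
        set r : ℕ := b.val % a.val with hr
        have hrlt : r < a.val := Nat.mod_lt _ hav
        set c : ZMod N := (r : ZMod N) with hc
        have hcv : c.val = r := ZMod.val_cast_of_lt (lt_trans hrlt (ZMod.val_lt a))
        -- (c, -a) vanishes by induction
        have h1 : ∀ τ : ℂ, 0 < τ.im → K c (-a) τ = 0 := by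
          intro τ' hτ'
          exact ih c.val (by rw [hcv, ← ha]; exact hrlt) c (-a) rfl τ' hτ'
        -- three S-steps: (c,-a) → (-a,-c) → (-c,a) → (a,c)
        have h2 := hSstep c (-a) h1
        have h3 := hSstep (-a) (-c) (by simpa using h2)
        have h4 := hSstep (-c) a (by simpa using h3)
        have h5 : ∀ τ : ℂ, 0 < τ.im → K a c τ = 0 := by simpa using h4
        -- q T-steps: (a, c) → (a, c + q • a) = (a, b)
        have h6 := hTiter q a c h5
        have hb : c + q • a = b := by
          have hnat : a.val * q + r = b.val := Nat.div_add_mod b.val a.val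
          have : ((a.val * q + r : ℕ) : ZMod N) = ((b.val : ℕ) : ZMod N) := by rw [hnat]
          push_cast [ZMod.natCast_val] at this
          simp only [ZMod.cast_id] at this
          rw [hc, nsmul_eq_mul, ← this]
          push_cast
          ring
        rw [← hb]
        exact h6 τ hτ
  -- Fourier inversion: recover H from K
  have hHzero : ∀ (i l : ZMod N) (τ : ℂ), 0 < τ.im → H i l τ = 0 := by
    intro i l τ hτ
    have hinv : (∑ m : ZMod N, eZ N (m * (-l)) * K i m τ) = (N : ℂ) * H i l τ := by
      simp only [hKdef]
      have e1 : ∀ m : ZMod N, eZ N (m * (-l)) * ∑ l' : ZMod N, eZ N (m * l') * H i l' τ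
          = ∑ l' : ZMod N, eZ N ((l' - l) * m) * H i l' τ := by
        intro m
        rw [Finset.mul_sum]
        refine Finset.sum_congr rfl fun l' _ => ?_
        rw [← mul_assoc, ← eZ_add N]
        congr 2
        ring
      simp only [e1]
      rw [Finset.sum_comm]
      have e2 : ∀ l' : ZMod N, (∑ m : ZMod N, eZ N ((l' - l) * m) * H i l' τ)
          = (if l' - l = 0 then (N : ℂ) else 0) * H i l' τ := by
        intro l'
        rw [← sum_eZ N (l' - l), Finset.sum_mul]
      simp only [e2]
      have e3 : ∀ l' : ZMod N, (if l' - l = 0 then (N : ℂ) else 0)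
          = if l' = l then (N : ℂ) else 0 := by
        intro l'; simp [sub_eq_zero]
      simp only [e3, ite_mul, zero_mul]
      rw [Finset.sum_ite_eq' Finset.univ l (fun l' => (N : ℂ) * H i l' τ)]
      simp
    have hK0 : (∑ m : ZMod N, eZ N (m * (-l)) * K i m τ) = 0 := by
      refine Finset.sum_eq_zero fun m _ => ?_
      rw [hmain i.val i m rfl τ hτ, mul_zero]
    have hz : (N : ℂ) * H i l τ = 0 := by rw [← hinv]; exact hK0
    exact (mul_eq_zero.mp hz).resolve_left hNC
  intro i k τ hτ
  have := hHzero i k τ hτ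
  simpa [hHdef, sub_eq_zero] using this
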